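/- arXiv:1311.5069 — 2 statements merged into one kernel-verified Lean document; each statement's English description precedes it below -/
import Mathlib

section
/- Let D = diag(λ₁,…,λₙ) be a diagonal n×n complex matrix with λ_k > 0 for all k and Σ_{k=1}^n λ_k = 1, let f ∈ F_op, and let A⁽¹⁾,…,A⁽ᴺ⁾ be Hermitian n×n complex matrices. Then det(Cov_D) ≥ det(qCov^{as}_{D,f}), where Cov_D = Cov_{D,g_cl} and qCov^{as}_{D,f} = Cov_{D,g_f^{as}}. -/
open ComplexOrder Matrix

/-- The diagonal density matrix `D = diag(λ₁,…,λₙ)`. -/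
noncomputable def Dmat {n : ℕ} (lam : Fin n → ℝ) : Matrix (Fin n) (Fin n) ℂ :=
  Matrix.diagonal fun k => (lam k : ℂ)

/-- `A₀ = A - Tr(D A)·I`. -/
noncomputable def cent {n : ℕ} (lam : Fin n → ℝ) (A : Matrix (Fin n) (Fin n) ℂ) :
    Matrix (Fin n) (Fin n) ℂ :=
  A - (Dmat lam * A).trace • (1 : Matrix (Fin n) (Fin n) ℂ)

/-- The `N×N` covariance matrix `[Cov_{D,g}]_{ij} = (A⁽ⁱ⁾₀, A⁽ʲ⁾₀)_{D,g}` where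
`(A,B)_{D,g} = Σ_{k,l} A_{lk}·B_{kl}·g(λ_k,λ_l)`. -/
noncomputable def covM {n N : ℕ} (lam : Fin n → ℝ) (g : ℝ → ℝ → ℝ)
    (A : Fin N → Matrix (Fin n) (Fin n) ℂ) : Matrix (Fin N) (Fin N) ℂ :=
  Matrix.of fun i j =>
    ∑ k, ∑ l, (g (lam k) (lam l) : ℂ) * cent lam (A i) l k * cent lam (A j) k l
/-- `f ∈ F_op`: `f : (0,∞) → (0,∞)` is operator monotone (via the continuous functional
calculus on Hermitian matrices, with the Loewner order expressed through `PosSemidef`),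
satisfies `f(x) = x·f(1/x)` for `x > 0`, and `f(1) = 1`. -/
structure IsFop (f : ℝ → ℝ) : Prop where
  pos : ∀ x : ℝ, 0 < x → 0 < f x
  opMono : ∀ (m : ℕ) (X Y : Matrix (Fin m) (Fin m) ℂ), X.PosSemidef → Y.PosSemidef →
    (Y - X).PosSemidef → (cfc f Y - cfc f X).PosSemidef
  funcEq : ∀ x : ℝ, 0 < x → f x = x * f x⁻¹
  normalized : f 1 = 1

/-- `f(0) = lim_{t→0⁺} f(t)`. -/
def IsFzero (f : ℝ → ℝ) (f0 : ℝ) : Prop :=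
  Filter.Tendsto f (nhdsWithin 0 (Set.Ioi 0)) (nhds f0)

/-- `m_f(x,y) = y·f(x/y)`. -/
noncomputable def mfun (f : ℝ → ℝ) (x y : ℝ) : ℝ := y * f (x / y)

/-- `g_cl(x,y) = (x+y)/2`. -/
noncomputable def gcl (x y : ℝ) : ℝ := (x + y) / 2

/-- `g_f^{as}(x,y) = f(0)·(x−y)²/(2·m_f(x,y))`. -/
noncomputable def gas (f : ℝ → ℝ) (f0 : ℝ) (x y : ℝ) : ℝ :=
  f0 * (x - y) ^ 2 / (2 * mfun f x y)

/-- `g_f^{s}(x,y) = f(0)·(x+y)²/(2·m_f(x,y))`. -/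
noncomputable def gs (f : ℝ → ℝ) (f0 : ℝ) (x y : ℝ) : ℝ :=
  f0 * (x + y) ^ 2 / (2 * mfun f x y)

/-! ### Auxiliary lemmas -/

/-- Operator monotone implies (scalar) monotone, via `1×1` matrices. -/
lemma IsFop.mono {f : ℝ → ℝ} (hf : IsFop f) {x y : ℝ} (hx : 0 ≤ x) (hxy : x ≤ y) :
    f x ≤ f y := by
  have hkey := hf.opMono 1 (algebraMap ℝ _ x) (algebraMap ℝ _ y) ?_ ?_ ?_
  · rw [cfc_algebraMap, cfc_algebraMap, ← map_sub] at hkey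
    have h0 := hkey.dotProduct_mulVec_nonneg (fun _ => 1)
    have h2 : (0:ℂ) ≤ ((f y - f x : ℝ) : ℂ) := by
      simpa [Matrix.algebraMap_eq_diagonal, dotProduct, mulVec, Matrix.diagonal] using h0
    have := (Complex.real_le_real (x := 0) (y := f y - f x)).mp (by simpa using h2)
    linarith
  · rw [Matrix.algebraMap_eq_diagonal]
    exact posSemidef_diagonal_iff.mpr fun i => by
      simpa [Complex.real_le_real] using hx
  · rw [Matrix.algebraMap_eq_diagonal]
    exact posSemidef_diagonal_iff.mpr fun i => by
      have : (0:ℝ) ≤ y := le_trans hx hxy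
      simpa [Complex.real_le_real] using this
  · rw [← map_sub, Matrix.algebraMap_eq_diagonal]
    exact posSemidef_diagonal_iff.mpr fun i => by
      simpa [Complex.real_le_real] using sub_nonneg.mpr hxy

/-- The key scalar inequalities: `0 ≤ g_f^{as}(x,y) ≤ g_cl(x,y)` for `x, y > 0`. -/
lemma gas_nonneg_and_le_gcl {f : ℝ → ℝ} (hf : IsFop f) {f0 : ℝ} (hf0 : IsFzero f f0)
    {x y : ℝ} (hx : 0 < x) (hy : 0 < y) :
    0 ≤ gas f f0 x y ∧ gas f f0 x y ≤ gcl x y := by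
  have hle : ∀ s : ℝ, 0 < s → f0 ≤ f s := by
    intro s hs
    refine le_of_tendsto hf0 ?_
    filter_upwards [self_mem_nhdsWithin,
      eventually_nhdsWithin_of_eventually_nhds (eventually_lt_nhds hs)] with t ht hts
    exact hf.mono (le_of_lt ht) (le_of_lt hts)
  have hf0nn : 0 ≤ f0 := by
    refine ge_of_tendsto hf0 ?_
    filter_upwards [self_mem_nhdsWithin] with t ht
    exact (hf.pos t ht).le
  set t : ℝ := x / y with htdef
  have ht : 0 < t := div_pos hx hy
  have hm : mfun f x y = y * f t := rfl
  have hmpos : 0 < mfun f x y := by rw [hm]; exact mul_pos hy (hf.pos t ht)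
  have h1 : f0 ≤ f t := hle t ht
  have h2 : t * f0 ≤ f t := by
    have h := hf.funcEq t ht
    have h3 : f0 ≤ f t⁻¹ := hle _ (by positivity)
    nlinarith
  have hxty : x = t * y := by rw [htdef, div_mul_cancel₀ x hy.ne']
  have hkey2 : f0 * (t - 1) ^ 2 ≤ (t + 1) * f t := by
    rcases le_or_gt t 1 with hc | hc
    · calc f0 * (t - 1) ^ 2 ≤ f0 * (t + 1) :=
            mul_le_mul_of_nonneg_left (by nlinarith) hf0nn
        _ ≤ (t + 1) * f t := by nlinarith
    · calc f0 * (t - 1) ^ 2 ≤ f0 * (t * (t + 1)) :=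
            mul_le_mul_of_nonneg_left (by nlinarith) hf0nn
        _ ≤ (t + 1) * f t := by
            nlinarith [mul_le_mul_of_nonneg_right h2 (show (0:ℝ) ≤ t + 1 by linarith)]
  have key : f0 * (x - y) ^ 2 ≤ (x + y) * mfun f x y := by
    rw [hm]
    calc f0 * (x - y) ^ 2 = (f0 * (t - 1) ^ 2) * y ^ 2 := by rw [hxty]; ring
      _ ≤ ((t + 1) * f t) * y ^ 2 := mul_le_mul_of_nonneg_right hkey2 (sq_nonneg y)
      _ = (x + y) * (y * f t) := by rw [hxty]; ring
  constructor
  · exact div_nonneg (by positivity) (by positivity)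
  · rw [gas, gcl, div_le_div_iff₀ (by positivity) (by norm_num)]
    nlinarith [key]

lemma cent_isHermitian {n : ℕ} (lam : Fin n → ℝ) {A : Matrix (Fin n) (Fin n) ℂ}
    (hA : A.IsHermitian) : (cent lam A).IsHermitian := by
  have htr : star (Dmat lam * A).trace = (Dmat lam * A).trace := by
    have h : (Dmat lam * A).trace = ∑ k, (lam k : ℂ) * A k k := by
      simp [Matrix.trace, Matrix.diag, Dmat, Matrix.diagonal_mul]
    rw [h, star_sum]
    refine Finset.sum_congr rfl fun k _ => ?_
    rw [star_mul', hA.apply k k, Complex.star_def, Complex.conj_ofReal, mul_comm]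
  unfold cent Matrix.IsHermitian
  rw [conjTranspose_sub, conjTranspose_smul, conjTranspose_one, hA.eq, htr]

lemma posSemidef_sum {N : ℕ} {ι : Type*} [Fintype ι] (M : ι → Matrix (Fin N) (Fin N) ℂ)
    (h : ∀ i, (M i).PosSemidef) : (∑ i, M i).PosSemidef :=
  Finset.sum_induction M _ (fun _ _ ha hb => ha.add hb) .zero (fun i _ => h i)

lemma covM_posSemidef {n N : ℕ} (lam : Fin n → ℝ) (g : ℝ → ℝ → ℝ)
    (hg : ∀ k l, 0 ≤ g (lam k) (lam l))
    (A : Fin N → Matrix (Fin n) (Fin n) ℂ) (hA : ∀ a, (A a).IsHermitian) :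
    (covM lam g A).PosSemidef := by
  have hB : ∀ a, (cent lam (A a)).IsHermitian := fun a => cent_isHermitian lam (hA a)
  have hrep : covM lam g A = ∑ p : Fin n × Fin n, (g (lam p.1) (lam p.2) : ℂ) •
      vecMulVec (fun a => cent lam (A a) p.2 p.1)
        (star fun a => cent lam (A a) p.2 p.1) := by
    ext i j
    rw [Matrix.sum_apply]
    show (∑ k, ∑ l, (g (lam k) (lam l) : ℂ) * cent lam (A i) l k * cent lam (A j) k l) = _
    rw [← Finset.sum_product']
    refine Finset.sum_congr rfl fun p _ => ?_
    simp only [Matrix.smul_apply, vecMulVec_apply, Pi.star_apply, smul_eq_mul]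
    rw [← (hB j).apply p.1 p.2]
    ring
  rw [hrep]
  refine _root_.posSemidef_sum _ fun p => ?_
  set v : Fin N → ℂ := fun a => cent lam (A a) p.2 p.1
  have h1 : (vecMulVec v (star v)).PosSemidef := by
    rw [vecMulVec_eq (Fin 1), ← conjTranspose_replicateCol]
    exact posSemidef_self_mul_conjTranspose _
  have h2 : (0:ℝ) ≤ g (lam p.1) (lam p.2) := hg p.1 p.2
  refine PosSemidef.of_dotProduct_mulVec_nonneg ?_ ?_
  · unfold Matrix.IsHermitian
    rw [conjTranspose_smul, h1.1]
    congr 1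
    simp [Complex.star_def, Complex.conj_ofReal]
  · intro x
    rw [smul_mulVec, dotProduct_smul]
    have h3 := h1.dotProduct_mulVec_nonneg x
    have hcast : (0:ℂ) ≤ (g (lam p.1) (lam p.2) : ℂ) := by
      simpa [Complex.real_le_real] using h2
    exact smul_nonneg hcast h3

lemma covM_sub {n N : ℕ} (lam : Fin n → ℝ) (g₁ g₂ : ℝ → ℝ → ℝ)
    (A : Fin N → Matrix (Fin n) (Fin n) ℂ) :
    covM lam g₁ A - covM lam g₂ A = covM lam (fun x y => g₁ x y - g₂ x y) A := by
  ext i j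
  show (covM lam g₁ A i j) - (covM lam g₂ A i j) = _
  simp only [covM, of_apply, ← Finset.sum_sub_distrib]
  refine Finset.sum_congr rfl fun k _ => Finset.sum_congr rfl fun l _ => ?_
  push_cast
  ring

/-- Monotonicity of determinants: if `0 ≤ P ≤ Q` (Loewner), then `det P ≤ det Q`. -/
lemma det_re_le_det_re {N : ℕ} {P Q : Matrix (Fin N) (Fin N) ℂ}
    (hP : P.PosSemidef) (hQP : (Q - P).PosSemidef) : P.det.re ≤ Q.det.re := by
  have hQ : Q.PosSemidef := by simpa using hP.add hQP
  by_cases hdet : Q.det = 0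
  · obtain ⟨v, hv, hQv⟩ := Matrix.exists_mulVec_eq_zero_iff.mpr hdet
    have h1 : star v ⬝ᵥ P *ᵥ v = 0 := by
      refine le_antisymm ?_ (hP.dotProduct_mulVec_nonneg v)
      have h2 := hQP.dotProduct_mulVec_nonneg v
      rw [sub_mulVec, dotProduct_sub, hQv, dotProduct_zero] at h2
      simpa using h2
    have h2 : P.det = 0 := Matrix.exists_mulVec_eq_zero_iff.mp
      ⟨v, hv, (hP.dotProduct_mulVec_zero_iff v).mp h1⟩
    simp [h2, hdet]
  · obtain ⟨S, hS, hSS⟩ : ∃ S : Matrix (Fin N) (Fin N) ℂ, S.PosSemidef ∧ S * S = Q := by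
      open scoped MatrixOrder in
      exact ⟨CFC.sqrt Q, Matrix.nonneg_iff_posSemidef.mp (CFC.sqrt_nonneg Q),
        CFC.sqrt_mul_sqrt_self Q (Matrix.nonneg_iff_posSemidef.mpr hQ)⟩
    have hdS : S.det ≠ 0 := by
      intro h
      apply hdet
      rw [← hSS, det_mul, h, mul_zero]
    have hSu : IsUnit S.det := hdS.isUnit
    have hinv1 : S⁻¹ * S = 1 := nonsing_inv_mul S hSu
    have hinv2 : S * S⁻¹ = 1 := mul_nonsing_inv S hSu
    have hSinvH : (S⁻¹)ᴴ = S⁻¹ := hS.1.inv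
    have hM : (S⁻¹ * P * S⁻¹).PosSemidef := by
      have h := hP.mul_mul_conjTranspose_same S⁻¹
      rwa [hSinvH] at h
    have h1M : (1 - S⁻¹ * P * S⁻¹).PosSemidef := by
      have key : 1 - S⁻¹ * P * S⁻¹ = S⁻¹ * (Q - P) * S⁻¹ := by
        rw [mul_sub, sub_mul]
        congr 1
        rw [← hSS, ← mul_assoc, hinv1, one_mul, hinv2]
      rw [key]
      have h := hQP.mul_mul_conjTranspose_same S⁻¹
      rwa [hSinvH] at h
    have hμ0 : ∀ i, 0 ≤ hM.1.eigenvalues i := hM.eigenvalues_nonneg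
    have hμ1 : ∀ i, hM.1.eigenvalues i ≤ 1 := by
      intro i
      have hray := h1M.re_dotProduct_nonneg ⇑(hM.1.eigenvectorBasis i)
      rw [sub_mulVec, dotProduct_sub, map_sub, one_mulVec] at hray
      have hnorm : RCLike.re (star ⇑(hM.1.eigenvectorBasis i) ⬝ᵥ ⇑(hM.1.eigenvectorBasis i))
          = 1 := by
        rw [dotProduct_comm]
        simp [← EuclideanSpace.inner_eq_star_dotProduct, inner_self_eq_norm_sq_to_K,
          hM.1.eigenvectorBasis.orthonormal.1 i]
      rw [hnorm, ← hM.1.eigenvalues_eq i] at hray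
      linarith
    have hdetM : (S⁻¹ * P * S⁻¹).det = ((∏ i, hM.1.eigenvalues i : ℝ) : ℂ) := by
      rw [hM.1.det_eq_prod_eigenvalues]
      push_cast
      rfl
    have hdetQ : Q.det = ((∏ i, hQ.1.eigenvalues i : ℝ) : ℂ) := by
      rw [hQ.1.det_eq_prod_eigenvalues]
      push_cast
      rfl
    have hPeq : P = S * (S⁻¹ * P * S⁻¹) * S := by
      calc P = (S * S⁻¹) * P * (S⁻¹ * S) := by rw [hinv2, hinv1, one_mul, mul_one]
        _ = S * (S⁻¹ * P * S⁻¹) * S := by noncomm_ring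
    have hdetP : P.det = Q.det * (S⁻¹ * P * S⁻¹).det := by
      conv_lhs => rw [hPeq]
      rw [← hSS]
      simp only [det_mul]
      ring
    have hr1 : ∏ i, hM.1.eigenvalues i ≤ 1 :=
      Finset.prod_le_one (fun i _ => hμ0 i) (fun i _ => hμ1 i)
    have hr0 : 0 ≤ ∏ i, hM.1.eigenvalues i := Finset.prod_nonneg fun i _ => hμ0 i
    have hq0 : 0 ≤ ∏ i, hQ.1.eigenvalues i :=
      Finset.prod_nonneg fun i _ => hQ.eigenvalues_nonneg i
    rw [hdetP, hdetQ, hdetM, ← Complex.ofReal_mul]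
    simp only [Complex.ofReal_re]
    nlinarith

/-- `det(Cov_D) ≥ det(qCov^{as}_{D,f})`. -/
theorem det_cov_ge_det_qCov_as (n N : ℕ) (lam : Fin n → ℝ)
    (hlam : ∀ k, 0 < lam k) (hsum : ∑ k, lam k = 1)
    (f : ℝ → ℝ) (hf : IsFop f) (f0 : ℝ) (hf0 : IsFzero f f0)
    (A : Fin N → Matrix (Fin n) (Fin n) ℂ) (hA : ∀ a, (A a).IsHermitian) :
    (covM lam (gas f f0) A).det.re ≤ (covM lam gcl A).det.re := by
  have hP : (covM lam (gas f f0) A).PosSemidef := by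
    refine covM_posSemidef lam _ (fun k l => ?_) A hA
    exact (gas_nonneg_and_le_gcl hf hf0 (hlam k) (hlam l)).1
  have hQP : (covM lam gcl A - covM lam (gas f f0) A).PosSemidef := by
    rw [covM_sub]
    refine covM_posSemidef lam _ (fun k l => ?_) A hA
    have h := gas_nonneg_and_le_gcl hf hf0 (hlam k) (hlam l)
    linarith [h.2]
  exact det_re_le_det_re hP hQP
end

section
/- For every f ∈ F_op and all x, y > 0, one has g_cl(x,y) ≥ g_f^{as}(x,y); equivalently, (x+y)·m_f(x,y) ≥ f(0)·(x−y)². -/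
open ComplexOrder Matrix

-- auxiliary lemmas

lemma quadaux (a b c X Y r : ℝ) (ha : 0 ≤ a) (hc : 0 ≤ c) (hX : 0 ≤ X) (hY : 0 ≤ Y)
    (hb : b^2 ≤ a*c) (hr : r^2 ≤ X*Y) : 0 ≤ a*X + c*Y + 2*b*r := by
  have hS : 0 ≤ a*X + c*Y := by positivity
  have h4 : (2*(b*r))^2 ≤ (a*X+c*Y)^2 := by
    nlinarith [sq_nonneg (a*X - c*Y), mul_nonneg (sub_nonneg.2 hb) (mul_nonneg hX hY),
      mul_nonneg (sq_nonneg b) (sub_nonneg.2 hr)]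
  have h5 := (abs_le_of_sq_le_sq' h4 hS).1
  linarith

lemma psd2 (a b c : ℝ) (ha : 0 ≤ a) (hc : 0 ≤ c) (hd : b^2 ≤ a*c) :
    (!![(a:ℂ), b; b, c]).PosSemidef := by
  rw [posSemidef_iff_dotProduct_mulVec]
  constructor
  · ext i j
    fin_cases i <;> fin_cases j <;>
      simp [Matrix.conjTranspose_apply, Complex.conj_ofReal]
  · intro x
    have h : star x ⬝ᵥ (!![(a:ℂ), b; b, c] *ᵥ x)
        = ((a * Complex.normSq (x 0) + c * Complex.normSq (x 1)
            + 2*b*((starRingEnd ℂ (x 0) * x 1).re) : ℝ) : ℂ) := by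
      simp [dotProduct, Matrix.mulVec, Fin.sum_univ_two, Complex.normSq_apply]
      simp [Complex.ext_iff]
      constructor <;> ring
    rw [h]
    rw [Complex.zero_le_real]
    have habs : ((starRingEnd ℂ (x 0) * x 1).re)^2 ≤ Complex.normSq (x 0) * Complex.normSq (x 1) := by
      simp [Complex.normSq_apply, Complex.mul_re]
      nlinarith [sq_nonneg ((x 0).re * (x 1).im - (x 0).im * (x 1).re)]
    have := quadaux a b c (Complex.normSq (x 0)) (Complex.normSq (x 1))
      ((starRingEnd ℂ (x 0) * x 1).re) ha hc (Complex.normSq_nonneg _) (Complex.normSq_nonneg _) hd habs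
    linarith


open Polynomial in
lemma spec_subset {M : Matrix (Fin 2) (Fin 2) ℂ} (p q : ℝ)
    (hann : (M - p • 1) * (M - q • 1) = 0) :
    spectrum ℝ M ⊆ {p, q} := by
  intro r hr
  have h1 := spectrum.subset_polynomial_aeval M ((X - C p) * (X - C q))
    ⟨r, hr, rfl⟩
  rw [_root_.map_mul, _root_.map_sub, _root_.map_sub, aeval_X, aeval_C, aeval_C,
    Algebra.algebraMap_eq_smul_one, Algebra.algebraMap_eq_smul_one, hann,
    spectrum.zero_eq] at h1
  simp only [eval_mul, eval_sub, eval_X, eval_C, Set.mem_singleton_iff] at h1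
  rcases mul_eq_zero.mp h1 with h | h
  · left; linarith [sub_eq_zero.mp h]
  · right; simp only [Set.mem_singleton_iff]; linarith [sub_eq_zero.mp h]

lemma cfc_affine {M : Matrix (Fin 2) (Fin 2) ℂ} (hM : IsSelfAdjoint M) (p q : ℝ) (hpq : p ≠ q)
    (hann : (M - p • 1) * (M - q • 1) = 0) (f : ℝ → ℝ) :
    cfc f M = f p • (1 : Matrix (Fin 2) (Fin 2) ℂ) + ((f q - f p)/(q - p)) • (M - p • 1) := by
  have hqp : q - p ≠ 0 := sub_ne_zero.mpr (Ne.symm hpq)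
  set β : ℝ := (f q - f p)/(q - p) with hβ
  have hfg : cfc f M = cfc (fun x : ℝ => f p + β * (x - p)) M := by
    apply cfc_congr
    intro x hx
    rcases spec_subset p q hann hx with rfl | hx
    · simp
    · simp only [Set.mem_singleton_iff] at hx
      subst hx
      show f x = f p + (f x - f p) / (x - p) * (x - p)
      rw [div_mul_cancel₀ _ hqp]
      ring
  rw [hfg, cfc_add .., cfc_const_mul .., cfc_sub .., cfc_id' ℝ M, cfc_const ..,
    cfc_const .., Algebra.algebraMap_eq_smul_one, Algebra.algebraMap_eq_smul_one]

set_option maxHeartbeats 1000000 in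
lemma key_step (f : ℝ → ℝ) (hf : IsFop f) (t ε c2 : ℝ) (hε : 0 < ε) (hεt : ε < t)
    (ht1 : t < 1) (hc2 : 0 ≤ c2) (hδ : 0 < t - ε - (1-ε)*c2) :
    c2 * f 1 + (1 - c2) * f ε ≤ f t := by
  have hε1 : ε < 1 := lt_trans hεt ht1
  have hc21 : c2 < 1 := by nlinarith
  set δ : ℝ := t - ε - (1-ε)*c2 with hδdef
  set b : ℝ := Real.sqrt (c2*(1-c2)) with hbdef
  have hb2 : b^2 = c2*(1-c2) := Real.sq_sqrt (by nlinarith)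
  set μ : ℝ := max (ε + (1-ε)*(1-c2) + (1-ε)^2*(c2*(1-c2))/δ) (t+1) with hμdef
  have hμ1 : ε + (1-ε)*(1-c2) + (1-ε)^2*(c2*(1-c2))/δ ≤ μ := le_max_left _ _
  have hμ2 : t + 1 ≤ μ := le_max_right _ _
  set X : Matrix (Fin 2) (Fin 2) ℂ :=
    !![((ε + (1-ε)*c2 : ℝ):ℂ), ((1-ε)*b : ℝ); ((1-ε)*b : ℝ), ((ε + (1-ε)*(1-c2) : ℝ):ℂ)] with hXdef
  set Y : Matrix (Fin 2) (Fin 2) ℂ := !![(t:ℂ), ((0:ℝ):ℂ); ((0:ℝ):ℂ), (μ:ℂ)] with hYdef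
  have hXpsd : X.PosSemidef := by
    rw [hXdef]
    have hb2' : ((1-ε)*b)^2 = (1-ε)^2*(c2*(1-c2)) := by linear_combination (1-ε)^2*hb2
    apply psd2
    · nlinarith
    · nlinarith
    · nlinarith [hb2']
  have hYpsd : Y.PosSemidef := by
    rw [hYdef]
    apply psd2
    · linarith
    · nlinarith
    · nlinarith
  have hYX : Y - X = !![((t - (ε + (1-ε)*c2) : ℝ):ℂ), (-((1-ε)*b) : ℝ);
      (-((1-ε)*b) : ℝ), ((μ - (ε + (1-ε)*(1-c2)) : ℝ):ℂ)] := by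
    rw [hXdef, hYdef]
    ext i j
    fin_cases i <;> fin_cases j <;> simp [Matrix.sub_apply] <;> push_cast <;> ring
  have hC : (1-ε)^2*(c2*(1-c2))/δ ≤ μ - (ε + (1-ε)*(1-c2)) := by linarith
  have hdiv : δ * ((1-ε)^2*(c2*(1-c2))/δ) = (1-ε)^2*(c2*(1-c2)) :=
    mul_div_cancel₀ _ (ne_of_gt hδ)
  have hYXpsd : (Y - X).PosSemidef := by
    rw [hYX]
    have hb2' : (-((1-ε)*b))^2 = (1-ε)^2*(c2*(1-c2)) := by linear_combination (1-ε)^2*hb2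
    apply psd2
    · linarith
    · nlinarith [div_nonneg (by nlinarith : (0:ℝ) ≤ (1-ε)^2*(c2*(1-c2))) (le_of_lt hδ)]
    · have h1 : δ * ((1-ε)^2*(c2*(1-c2))/δ) ≤ (t - (ε + (1-ε)*c2)) * (μ - (ε + (1-ε)*(1-c2))) := by
        apply mul_le_mul (by linarith) hC
          (div_nonneg (by nlinarith) (le_of_lt hδ)) (by linarith)
      rw [hdiv] at h1
      rw [hb2']
      linarith
  have hannX : (X - ε • 1) * (X - (1:ℝ) • 1) = 0 := by
    rw [hXdef]
    ext i j
    fin_cases i <;> fin_cases j <;>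
      · simp [Matrix.mul_apply, Fin.sum_univ_two, Matrix.sub_apply, Matrix.smul_apply,
          Matrix.one_apply, Complex.real_smul]
        norm_cast
        first
        | ring1
        | linear_combination (-(1-ε)^2) * hb2
        | linear_combination ((1-ε)^2) * hb2
  have hannY : (Y - t • 1) * (Y - μ • 1) = 0 := by
    rw [hYdef]
    ext i j
    fin_cases i <;> fin_cases j <;>
      simp [Matrix.mul_apply, Fin.sum_univ_two, Matrix.sub_apply, Matrix.smul_apply,
        Matrix.one_apply, Complex.real_smul]
  have hXsa : IsSelfAdjoint X := hXpsd.1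
  have hYsa : IsSelfAdjoint Y := hYpsd.1
  have hcmp := hf.opMono 2 X Y hXpsd hYpsd hYXpsd
  have h00 : 0 ≤ (cfc f Y - cfc f X) 0 0 := by
    have h := hcmp.dotProduct_mulVec_nonneg (Pi.single 0 1)
    simpa [Matrix.mulVec_single, dotProduct, Fin.sum_univ_two, Pi.single_apply] using h
  have hcfcX : cfc f X = f ε • (1 : Matrix (Fin 2) (Fin 2) ℂ)
      + ((f 1 - f ε)/(1-ε)) • (X - ε • 1) := cfc_affine hXsa ε 1 (by linarith) hannX f
  have hcfcY : cfc f Y = f t • (1 : Matrix (Fin 2) (Fin 2) ℂ)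
      + ((f μ - f t)/(μ-t)) • (Y - t • 1) := cfc_affine hYsa t μ (by linarith) hannY f
  have e1 : (cfc f Y) 0 0 = ((f t : ℝ) : ℂ) := by
    rw [hcfcY, hYdef]
    simp [Matrix.add_apply, Matrix.smul_apply, Matrix.sub_apply, Matrix.one_apply,
      Complex.real_smul]
  have e2 : (cfc f X) 0 0 = ((f ε + (f 1 - f ε) * c2 : ℝ) : ℂ) := by
    rw [hcfcX, hXdef]
    simp [Matrix.add_apply, Matrix.smul_apply, Matrix.sub_apply, Matrix.one_apply,
      Complex.real_smul]
    push_cast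
    have : (1:ℂ) - ε ≠ 0 := by
      intro hcon
      have : (1:ℝ) - ε = 0 := by exact_mod_cast hcon
      linarith
    field_simp
  rw [Matrix.sub_apply, e1, e2, ← Complex.ofReal_sub, Complex.zero_le_real] at h00
  linarith

lemma f0_nonneg (f : ℝ → ℝ) (hf : IsFop f) (f0 : ℝ) (hf0 : IsFzero f f0) : 0 ≤ f0 := by
  refine ge_of_tendsto hf0 ?_
  filter_upwards [self_mem_nhdsWithin] with ε hε
  exact le_of_lt (hf.pos ε hε)

lemma chord_lt (f : ℝ → ℝ) (hf : IsFop f) (f0 : ℝ) (hf0 : IsFzero f f0)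
    (t : ℝ) (ht : 0 < t) (ht1 : t < 1) : t + f0 * (1 - t) ≤ f t := by
  have hf1 : f 1 = 1 := hf.normalized
  set c2 : ℝ → ℝ := fun ε => (t - ε)/(1 - ε) - ε with hc2def
  have hcont : Filter.Tendsto c2 (nhdsWithin 0 (Set.Ioi 0)) (nhds t) := by
    have h1 : ContinuousAt (fun ε : ℝ => (t - ε)/(1 - ε) - ε) 0 := by
      apply ContinuousAt.sub
      · exact ContinuousAt.div (by fun_prop) (by fun_prop) (by norm_num)
      · fun_prop
    have h2 := h1.tendsto
    simp only [sub_zero, div_one] at h2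
    exact h2.mono_left nhdsWithin_le_nhds
  have hφ : Filter.Tendsto (fun ε => c2 ε * f 1 + (1 - c2 ε) * f ε)
      (nhdsWithin 0 (Set.Ioi 0)) (nhds (t * f 1 + (1 - t) * f0)) :=
    (hcont.mul tendsto_const_nhds).add
      ((tendsto_const_nhds.sub hcont).mul hf0)
  have hev1 : ∀ᶠ ε in nhdsWithin 0 (Set.Ioi 0), (0:ℝ) < ε := self_mem_nhdsWithin
  have hev2 : ∀ᶠ ε in nhdsWithin 0 (Set.Ioi 0), ε < t :=
    Filter.Eventually.filter_mono nhdsWithin_le_nhds (gt_mem_nhds ht)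
  have hev3 : ∀ᶠ ε in nhdsWithin 0 (Set.Ioi 0), 0 < c2 ε :=
    hcont.eventually (eventually_gt_nhds ht)
  have hle : t * f 1 + (1 - t) * f0 ≤ f t := by
    refine le_of_tendsto hφ ?_
    filter_upwards [hev1, hev2, hev3] with ε h1 h2 h3
    have h4 : ε < 1 := lt_trans h2 ht1
    have key : t - ε - (1 - ε) * c2 ε = ε * (1 - ε) := by
      show t - ε - (1 - ε) * ((t - ε)/(1 - ε) - ε) = ε * (1 - ε)
      have hne : (1:ℝ) - ε ≠ 0 := by linarith
      field_simp
      ring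
    exact key_step f hf t ε (c2 ε) h1 h2 ht1 (le_of_lt h3)
      (by rw [key]; nlinarith)
  rw [hf1] at hle
  linarith

lemma chord_ge (f : ℝ → ℝ) (hf : IsFop f) (f0 : ℝ) (hf0 : IsFzero f f0)
    (t : ℝ) (ht : 1 ≤ t) : 1 + f0 * (t - 1) ≤ f t := by
  rcases eq_or_lt_of_le ht with rfl | ht'
  · simp [hf.normalized]
  · have h0t : 0 < t := by linarith
    have hinv : t⁻¹ < 1 := by
      rw [inv_lt_one_iff₀]; right; exact ht'
    have hinvpos : 0 < t⁻¹ := inv_pos.mpr h0t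
    have h := chord_lt f hf f0 hf0 t⁻¹ hinvpos hinv
    have heq := hf.funcEq t h0t
    have h2 : t * (t⁻¹ + f0 * (1 - t⁻¹)) ≤ t * f t⁻¹ :=
      mul_le_mul_of_nonneg_left h (le_of_lt h0t)
    rw [← heq] at h2
    have h3 : t * (t⁻¹ + f0 * (1 - t⁻¹)) = 1 + f0 * (t - 1) := by
      field_simp
    linarith [h3 ▸ h2]


/-- For every `f ∈ F_op` and `x, y > 0`: `g_cl(x,y) ≥ g_f^{as}(x,y)`; equivalently `(x+y)·m_f(x,y) ≥ f(0)·(x−y)²`. -/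
theorem gcl_ge_gas
    (f : ℝ → ℝ) (hf : IsFop f) (f0 : ℝ) (hf0 : IsFzero f f0) :
    ∀ x y : ℝ, 0 < x → 0 < y → gas f f0 x y ≤ gcl x y ∧ f0 * (x - y) ^ 2 ≤ (x + y) * mfun f x y := by
  intro x y hx hy
  have hf0n : 0 ≤ f0 := f0_nonneg f hf f0 hf0
  have ht : 0 < x / y := div_pos hx hy
  have hm : 0 < mfun f x y := mul_pos hy (hf.pos _ ht)
  have key : f0 * (x/y - 1)^2 ≤ (x/y + 1) * f (x/y) := by
    rcases lt_or_ge (x/y) 1 with h | h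
    · have hc := chord_lt f hf f0 hf0 (x/y) ht h
      nlinarith [mul_nonneg hf0n (mul_nonneg ht.le (sub_nonneg.mpr h.le))]
    · have hc := chord_ge f hf f0 hf0 (x/y) h
      nlinarith [mul_nonneg hf0n (sub_nonneg.mpr h)]
  have hxy : x = (x/y) * y := by field_simp
  have main : f0 * (x - y) ^ 2 ≤ (x + y) * mfun f x y := by
    have h2 := mul_le_mul_of_nonneg_left key (sq_nonneg y)
    have hgoal : f0 * ((x/y)*y - y)^2 ≤ ((x/y)*y + y) * (y * f (x/y)) := by nlinarith [h2]
    rw [← hxy] at hgoal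
    rw [mfun]
    exact hgoal
  refine ⟨?_, main⟩
  rw [gas, gcl, div_le_div_iff₀ (by positivity) (by norm_num)]
  nlinarith [main]
end
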